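/- arXiv:2602.20833 — 5 statements merged into one kernel-verified Lean document; each statement's English description precedes it below -/
import Mathlib

section
/- Per-step bound for the Original-DRESS update: for every finite simple graph G, every symmetric nonnegative function d : V × V → ℝ with ‖u‖_d > 0 for every vertex u, and all vertices u, v, one has F(d)(u,v) ≤ ‖u‖_d/‖v‖_d + ‖v‖_d/‖u‖_d. -/
open Finset

/-- The closed neighborhood `N[u] = N(u) ∪ {u}` of a vertex. -/
def closedNbhd {V : Type*} [Fintype V] [DecidableEq V]
    (G : SimpleGraph V) [DecidableRel G.Adj] (u : V) : Finset V :=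
  insert u (G.neighborFinset u)

/-- The vertex norm `‖u‖_d = sqrt (∑_{x ∈ N[u]} d u x)`. -/
noncomputable def vnorm {V : Type*} [Fintype V] [DecidableEq V]
    (G : SimpleGraph V) [DecidableRel G.Adj] (d : V → V → ℝ) (u : V) : ℝ :=
  Real.sqrt (∑ x ∈ closedNbhd G u, d u x)

/-- The Original-DRESS update operator. -/
noncomputable def dress {V : Type*} [Fintype V] [DecidableEq V]
    (G : SimpleGraph V) [DecidableRel G.Adj] (d : V → V → ℝ) (u v : V) : ℝ :=
  (∑ x ∈ closedNbhd G u ∩ closedNbhd G v, (d u x + d x v)) /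
    (vnorm G d u * vnorm G d v)

/-- Per-step bound for the Original-DRESS update:
`F(d)(u,v) ≤ ‖u‖_d/‖v‖_d + ‖v‖_d/‖u‖_d`. -/
theorem dress_per_step_bound {V : Type*} [Fintype V] [DecidableEq V]
    (G : SimpleGraph V) [DecidableRel G.Adj] (d : V → V → ℝ)
    (hsym : ∀ u v, d u v = d v u)
    (hnonneg : ∀ u v, 0 ≤ d u v)
    (hnorm : ∀ u, 0 < vnorm G d u)
    (u v : V) :
    dress G d u v ≤ vnorm G d u / vnorm G d v + vnorm G d v / vnorm G d u := by
  set a := vnorm G d u with ha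
  set b := vnorm G d v with hb
  have hapos := hnorm u
  have hbpos := hnorm v
  have hasq : a ^ 2 = ∑ x ∈ closedNbhd G u, d u x := by
    rw [ha, vnorm, Real.sq_sqrt]
    exact Finset.sum_nonneg fun x _ => hnonneg u x
  have hbsq : b ^ 2 = ∑ x ∈ closedNbhd G v, d v x := by
    rw [hb, vnorm, Real.sq_sqrt]
    exact Finset.sum_nonneg fun x _ => hnonneg v x
  have hnum : (∑ x ∈ closedNbhd G u ∩ closedNbhd G v, (d u x + d x v)) ≤ a ^ 2 + b ^ 2 := by
    rw [Finset.sum_add_distrib, hasq, hbsq]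
    apply add_le_add
    · exact Finset.sum_le_sum_of_subset_of_nonneg (Finset.inter_subset_left)
        (fun x _ _ => hnonneg u x)
    · calc ∑ x ∈ closedNbhd G u ∩ closedNbhd G v, d x v
          = ∑ x ∈ closedNbhd G u ∩ closedNbhd G v, d v x := by
            exact Finset.sum_congr rfl fun x _ => hsym x v
        _ ≤ ∑ x ∈ closedNbhd G v, d v x :=
            Finset.sum_le_sum_of_subset_of_nonneg (Finset.inter_subset_right)
              (fun x _ _ => hnonneg v x)
  have key : a / b + b / a = (a ^ 2 + b ^ 2) / (a * b) := by
    field_simp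
  rw [dress, key]
  gcongr
end

section
/- If all vertex norms of d are equal, then every Original-DRESS updated value lies in [0, 2]: for every finite simple graph G and every symmetric nonnegative function d : V × V → ℝ with ‖u‖_d = ‖v‖_d > 0 for all vertices u, v, one has 0 ≤ F(d)(u,v) ≤ 2 for all u, v. -/
open Finset

/-- If all vertex norms of `d` are equal (and positive), then every
Original-DRESS updated value lies in `[0, 2]`. -/
theorem dress_range_of_equal_norms {V : Type*} [Fintype V] [DecidableEq V]
    (G : SimpleGraph V) [DecidableRel G.Adj] (d : V → V → ℝ)
    (hsym : ∀ u v, d u v = d v u)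
    (hnonneg : ∀ u v, 0 ≤ d u v)
    (hnormpos : ∀ u, 0 < vnorm G d u)
    (hnormeq : ∀ u v, vnorm G d u = vnorm G d v) :
    ∀ u v, 0 ≤ dress G d u v ∧ dress G d u v ≤ 2 := by
  intro u v
  have hupos := hnormpos u
  have hvpos := hnormpos v
  have hden : 0 < vnorm G d u * vnorm G d v := mul_pos hupos hvpos
  have hnum0 : 0 ≤ ∑ x ∈ closedNbhd G u ∩ closedNbhd G v, (d u x + d x v) :=
    Finset.sum_nonneg fun x _ => add_nonneg (hnonneg u x) (hnonneg x v)
  have hsq : ∀ w, vnorm G d w ^ 2 = ∑ x ∈ closedNbhd G w, d w x := by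
    intro w
    have : 0 ≤ ∑ x ∈ closedNbhd G w, d w x :=
      Finset.sum_nonneg fun x _ => hnonneg w x
    simp [vnorm, Real.sq_sqrt this]
  constructor
  · exact div_nonneg hnum0 hden.le
  · rw [dress, div_le_iff₀ hden]
    have h1 : ∑ x ∈ closedNbhd G u ∩ closedNbhd G v, d u x ≤
        ∑ x ∈ closedNbhd G u, d u x :=
      Finset.sum_le_sum_of_subset_of_nonneg (Finset.inter_subset_left)
        (fun x _ _ => hnonneg u x)
    have h2 : ∑ x ∈ closedNbhd G u ∩ closedNbhd G v, d x v ≤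
        ∑ x ∈ closedNbhd G v, d v x := by
      calc ∑ x ∈ closedNbhd G u ∩ closedNbhd G v, d x v
          = ∑ x ∈ closedNbhd G u ∩ closedNbhd G v, d v x := by
            exact Finset.sum_congr rfl fun x _ => hsym x v
        _ ≤ ∑ x ∈ closedNbhd G v, d v x :=
            Finset.sum_le_sum_of_subset_of_nonneg (Finset.inter_subset_right)
              (fun x _ _ => hnonneg v x)
    have key : ∑ x ∈ closedNbhd G u ∩ closedNbhd G v, (d u x + d x v) ≤
        vnorm G d u ^ 2 + vnorm G d v ^ 2 := by
      rw [Finset.sum_add_distrib, hsq u, hsq v]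
      exact add_le_add h1 h2
    have heq := hnormeq u v
    calc ∑ x ∈ closedNbhd G u ∩ closedNbhd G v, (d u x + d x v)
        ≤ vnorm G d u ^ 2 + vnorm G d v ^ 2 := key
      _ = 2 * (vnorm G d u * vnorm G d v) := by rw [heq]; ring
end

section
/- The prism graph admits no edge-constant fixed point of the Original-DRESS update: for the prism graph K_3 □ K_2, there is no real c > 0 such that the symmetric function d with d(u,u) = 2 for all u, d(u,v) = c for all adjacent u ~ v, and d(u,v) = 0 otherwise satisfies F(d)(u,v) = d(u,v) for every adjacent pair u ~ v. -/
open Finset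

/-- The prism graph: the box (Cartesian) product `K_3 □ K_2`. -/
abbrev Prism : SimpleGraph (Fin 3 × Fin 2) :=
  (⊤ : SimpleGraph (Fin 3)) □ (⊤ : SimpleGraph (Fin 2))

noncomputable instance : DecidableRel Prism.Adj := Classical.decRel _

/-- The edge-constant candidate: `2` on the diagonal, `c` on edges, `0`
elsewhere. -/
noncomputable def dConst (c : ℝ) : (Fin 3 × Fin 2) → (Fin 3 × Fin 2) → ℝ :=
  fun u v => if u = v then 2 else if Prism.Adj u v then c else 0

lemma prism_adj (u v : Fin 3 × Fin 2) :
    Prism.Adj u v ↔ (u.1 ≠ v.1 ∧ u.2 = v.2) ∨ (u.1 = v.1 ∧ u.2 ≠ v.2) := by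
  simp [SimpleGraph.boxProd_adj]; tauto

lemma dConst_self (c : ℝ) (u : Fin 3 × Fin 2) : dConst c u u = 2 := by
  simp [dConst]

lemma dConst_adj (c : ℝ) {u v : Fin 3 × Fin 2} (h : Prism.Adj u v) :
    dConst c u v = c := by
  rw [dConst, if_neg h.ne, if_pos h]

lemma adj_of (u v : Fin 3 × Fin 2)
    (h : (u.1 ≠ v.1 ∧ u.2 = v.2) ∨ (u.1 = v.1 ∧ u.2 ≠ v.2)) : Prism.Adj u v :=
  (prism_adj u v).2 h

lemma nb00 : closedNbhd Prism (0,0) = {((0:Fin 3),(0:Fin 2)),(1,0),(2,0),(0,1)} := by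
  ext x
  simp only [closedNbhd, SimpleGraph.mem_neighborFinset, prism_adj, Finset.mem_insert,
    Finset.mem_singleton]
  obtain ⟨a, b⟩ := x
  fin_cases a <;> fin_cases b <;> simp <;> decide

lemma nb10 : closedNbhd Prism (1,0) = {((1:Fin 3),(0:Fin 2)),(0,0),(2,0),(1,1)} := by
  ext x
  simp only [closedNbhd, SimpleGraph.mem_neighborFinset, prism_adj, Finset.mem_insert,
    Finset.mem_singleton]
  obtain ⟨a, b⟩ := x
  fin_cases a <;> fin_cases b <;> simp <;> decide

lemma nb01 : closedNbhd Prism (0,1) = {((0:Fin 3),(1:Fin 2)),(1,1),(2,1),(0,0)} := by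
  ext x
  simp only [closedNbhd, SimpleGraph.mem_neighborFinset, prism_adj, Finset.mem_insert,
    Finset.mem_singleton]
  obtain ⟨a, b⟩ := x
  fin_cases a <;> fin_cases b <;> simp <;> decide

/-- The prism graph admits no edge-constant fixed point of the Original-DRESS
update. -/
theorem prism_no_edge_constant_fixed_point :
    ¬ ∃ c : ℝ, 0 < c ∧
      ∀ u v, Prism.Adj u v → dress Prism (dConst c) u v = dConst c u v := by
  rintro ⟨c, hc, hfix⟩
  have a1 : Prism.Adj ((0:Fin 3),(0:Fin 2)) (1,0) := adj_of _ _ (Or.inl ⟨by decide, rfl⟩)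
  have a2 : Prism.Adj ((0:Fin 3),(0:Fin 2)) (0,1) := adj_of _ _ (Or.inr ⟨rfl, by decide⟩)
  have s00 : ∑ x ∈ closedNbhd Prism ((0:Fin 3),(0:Fin 2)), dConst c (0,0) x = 2 + 3*c := by
    rw [nb00, Finset.sum_insert (by decide), Finset.sum_insert (by decide),
      Finset.sum_insert (by decide), Finset.sum_singleton]
    rw [dConst_self, dConst_adj c a1,
      dConst_adj c (adj_of (0,0) (2,0) (Or.inl ⟨by decide, rfl⟩)),
      dConst_adj c a2]
    ring
  have s10 : ∑ x ∈ closedNbhd Prism ((1:Fin 3),(0:Fin 2)), dConst c (1,0) x = 2 + 3*c := by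
    rw [nb10, Finset.sum_insert (by decide), Finset.sum_insert (by decide),
      Finset.sum_insert (by decide), Finset.sum_singleton]
    rw [dConst_self, dConst_adj c (adj_of (1,0) (0,0) (Or.inl ⟨by decide, rfl⟩)),
      dConst_adj c (adj_of (1,0) (2,0) (Or.inl ⟨by decide, rfl⟩)),
      dConst_adj c (adj_of (1,0) (1,1) (Or.inr ⟨rfl, by decide⟩))]
    ring
  have s01 : ∑ x ∈ closedNbhd Prism ((0:Fin 3),(1:Fin 2)), dConst c (0,1) x = 2 + 3*c := by
    rw [nb01, Finset.sum_insert (by decide), Finset.sum_insert (by decide),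
      Finset.sum_insert (by decide), Finset.sum_singleton]
    rw [dConst_self, dConst_adj c (adj_of (0,1) (1,1) (Or.inl ⟨by decide, rfl⟩)),
      dConst_adj c (adj_of (0,1) (2,1) (Or.inl ⟨by decide, rfl⟩)),
      dConst_adj c (adj_of (0,1) (0,0) (Or.inr ⟨rfl, by decide⟩))]
    ring
  have hSpos : (0:ℝ) < 2 + 3*c := by linarith
  have i1 : closedNbhd Prism ((0:Fin 3),(0:Fin 2)) ∩ closedNbhd Prism (1,0) =
      {((0:Fin 3),(0:Fin 2)),(1,0),(2,0)} := by
    rw [nb00, nb10]; decide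
  have i2 : closedNbhd Prism ((0:Fin 3),(0:Fin 2)) ∩ closedNbhd Prism (0,1) =
      {((0:Fin 3),(0:Fin 2)),(0,1)} := by
    rw [nb00, nb01]; decide
  have num1 : ∑ x ∈ closedNbhd Prism ((0:Fin 3),(0:Fin 2)) ∩ closedNbhd Prism (1,0),
      (dConst c (0,0) x + dConst c x (1,0)) = 4 + 4*c := by
    rw [i1, Finset.sum_insert (by decide), Finset.sum_insert (by decide),
      Finset.sum_singleton]
    simp only [dConst_self, dConst_adj c a1,
      dConst_adj c (adj_of (0,0) (2,0) (Or.inl ⟨by decide, rfl⟩)),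
      dConst_adj c (adj_of (2,0) (1,0) (Or.inl ⟨by decide, rfl⟩))]
    ring
  have num2 : ∑ x ∈ closedNbhd Prism ((0:Fin 3),(0:Fin 2)) ∩ closedNbhd Prism (0,1),
      (dConst c (0,0) x + dConst c x (0,1)) = 4 + 2*c := by
    rw [i2, Finset.sum_insert (by decide), Finset.sum_singleton]
    simp only [dConst_self, dConst_adj c a2]
    ring
  have hv00 : vnorm Prism (dConst c) ((0:Fin 3),(0:Fin 2)) = Real.sqrt (2 + 3*c) := by
    rw [vnorm, s00]
  have hv10 : vnorm Prism (dConst c) ((1:Fin 3),(0:Fin 2)) = Real.sqrt (2 + 3*c) := by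
    rw [vnorm, s10]
  have hv01 : vnorm Prism (dConst c) ((0:Fin 3),(1:Fin 2)) = Real.sqrt (2 + 3*c) := by
    rw [vnorm, s01]
  have hss : Real.sqrt (2 + 3*c) * Real.sqrt (2 + 3*c) = 2 + 3*c :=
    Real.mul_self_sqrt (le_of_lt hSpos)
  have h1 := hfix _ _ a1
  have h2 := hfix _ _ a2
  rw [dress, num1, hv00, hv10, hss, dConst_adj c a1] at h1
  rw [dress, num2, hv00, hv01, hss, dConst_adj c a2] at h2
  have e1 : 4 + 4*c = c * (2 + 3*c) := by
    field_simp at h1; linarith [h1]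
  have e2 : 4 + 2*c = c * (2 + 3*c) := by
    field_simp at h2; linarith [h2]
  linarith
end

section
/- Original-DRESS distinguishes the prism graph from K_{3,3} (Theorem 2): let d_P be any symmetric fixed point of the Original-DRESS update on the prism graph K_3 □ K_2 that is strictly positive on all pairs (u,x) with x ∈ N[u], and let d_K be any such symmetric fixed point on the complete bipartite graph K_{3,3}. Then the multiset of the 9 edge values {d_P(u,v) : u ~ v} of the prism differs from the multiset of the 9 edge values {d_K(u,v) : u ~ v} of K_{3,3}. In particular, d_P takes at least two distinct values on edges while d_K is constant (equal to 2/√3) on edges. -/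
open Finset

/-- The multiset of edge values of a symmetric function `d` on a graph. -/
noncomputable def edgeValues {V : Type*} [Fintype V] [DecidableEq V]
    (G : SimpleGraph V) [DecidableRel G.Adj]
    (d : V → V → ℝ) (hsym : ∀ u v, d u v = d v u) : Multiset ℝ :=
  G.edgeFinset.val.map (Sym2.lift ⟨d, fun a b => (hsym b a).symm⟩)

/-- The complete bipartite graph `K_{3,3}` on `Fin 3 ⊕ Fin 3`. -/
abbrev K33 : SimpleGraph (Fin 3 ⊕ Fin 3) := completeBipartiteGraph (Fin 3) (Fin 3)

noncomputable instance : DecidableRel K33.Adj := Classical.decRel _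

section Aux
open Sum

variable {V : Type*} [Fintype V] [DecidableEq V]
    (G : SimpleGraph V) [DecidableRel G.Adj]

lemma mem_closed_self (u : V) : u ∈ closedNbhd G u := mem_insert_self _ _

lemma nbhd_sum_pos (d : V → V → ℝ) (u : V) (hpos : ∀ x ∈ closedNbhd G u, 0 < d u x) :
    0 < ∑ x ∈ closedNbhd G u, d u x :=
  Finset.sum_pos hpos ⟨u, mem_closed_self G u⟩

lemma vnorm_pos (d : V → V → ℝ) (u : V) (hpos : ∀ x ∈ closedNbhd G u, 0 < d u x) :
    0 < vnorm G d u := Real.sqrt_pos.mpr (nbhd_sum_pos G d u hpos)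

lemma vnorm_sq (d : V → V → ℝ) (u : V) (hpos : ∀ x ∈ closedNbhd G u, 0 < d u x) :
    vnorm G d u ^ 2 = ∑ x ∈ closedNbhd G u, d u x := by
  rw [vnorm, Real.sq_sqrt (nbhd_sum_pos G d u hpos).le]

lemma diag_eq_two (d : V → V → ℝ) (u : V)
    (hsym : ∀ a b, d a b = d b a)
    (hpos : ∀ x ∈ closedNbhd G u, 0 < d u x)
    (hfix : dress G d u u = d u u) : d u u = 2 := by
  have hS := nbhd_sum_pos G d u hpos
  rw [dress, inter_self] at hfix
  have h2 : ∑ x ∈ closedNbhd G u, (d u x + d x u) = 2 * ∑ x ∈ closedNbhd G u, d u x := by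
    rw [two_mul, ← Finset.sum_add_distrib]
    exact Finset.sum_congr rfl fun x _ => by rw [hsym x u]
  rw [h2] at hfix
  rw [← hfix, vnorm, Real.mul_self_sqrt hS.le]
  field_simp

lemma fin3_cases (j : Fin 3) : j = 0 ∨ j = 1 ∨ j = 2 := by omega

lemma nbhd_inl (i : Fin 3) :
    closedNbhd K33 (inl i) = {inl i, inr 0, inr 1, inr 2} := by
  ext x
  cases x <;> simp [closedNbhd, SimpleGraph.mem_neighborFinset]
  exact fin3_cases _

lemma nbhd_inr (j : Fin 3) :
    closedNbhd K33 (inr j) = {inr j, inl 0, inl 1, inl 2} := by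
  ext x
  cases x <;> simp [closedNbhd, SimpleGraph.mem_neighborFinset]
  exact fin3_cases _

lemma nbhd_inter (i j : Fin 3) :
    closedNbhd K33 (inl i) ∩ closedNbhd K33 (inr j) = {inl i, inr j} := by
  rw [nbhd_inl, nbhd_inr]
  fin_cases i <;> fin_cases j <;> decide

lemma pnbhd (u : Fin 3 × Fin 2) :
    closedNbhd Prism u = Finset.univ.filter (fun x => x = u ∨
      (x.1 ≠ u.1 ∧ x.2 = u.2) ∨ (x.1 = u.1 ∧ x.2 ≠ u.2)) := by
  ext ⟨a,b⟩
  simp [closedNbhd, SimpleGraph.mem_neighborFinset, SimpleGraph.boxProd_adj,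
    Prod.ext_iff, eq_comm, and_comm]

lemma pn00 : closedNbhd Prism (0,0) = {(0,0),(1,0),(2,0),(0,1)} := by
  rw [pnbhd]; decide
lemma pn01 : closedNbhd Prism (0,1) = {(0,1),(1,1),(2,1),(0,0)} := by
  rw [pnbhd]; decide
lemma pn10 : closedNbhd Prism (1,0) = {(1,0),(0,0),(2,0),(1,1)} := by
  rw [pnbhd]; decide

lemma pint_vert : closedNbhd Prism (0,0) ∩ closedNbhd Prism (0,1) = {(0,0),(0,1)} := by
  rw [pn00, pn01]; decide
lemma pint_tri : closedNbhd Prism (0,0) ∩ closedNbhd Prism (1,0) = {(0,0),(1,0),(2,0)} := by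
  rw [pn00, pn10]; decide

/-- `K_{3,3}` part: every edge value of a positive symmetric fixed point is `2/√3`. -/
lemma K33_const
    (dK : (Fin 3 ⊕ Fin 3) → (Fin 3 ⊕ Fin 3) → ℝ)
    (hKsym : ∀ u v, dK u v = dK v u)
    (hKpos : ∀ u x, x ∈ closedNbhd K33 u → 0 < dK u x)
    (hKfix : ∀ u v, v ∈ closedNbhd K33 u → dress K33 dK u v = dK u v) :
    ∀ u v, K33.Adj u v → dK u v = 2 / Real.sqrt 3 := by
  set n : Fin 3 → ℝ := fun i => vnorm K33 dK (inl i) with hn_def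
  set m : Fin 3 → ℝ := fun j => vnorm K33 dK (inr j) with hm_def
  set e : Fin 3 → Fin 3 → ℝ := fun i j => dK (inl i) (inr j) with he_def
  have hd2 : ∀ u, dK u u = 2 := fun u =>
    diag_eq_two K33 dK u hKsym (hKpos u) (hKfix u u (mem_closed_self K33 u))
  have hnpos : ∀ i, 0 < n i := fun i => vnorm_pos K33 dK (inl i) (hKpos _)
  have hmpos : ∀ j, 0 < m j := fun j => vnorm_pos K33 dK (inr j) (hKpos _)
  have hepos : ∀ i j, 0 < e i j := fun i j => by
    apply hKpos (inl i) (inr j)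
    rw [nbhd_inl]; simp
    exact fin3_cases j
  have hnsq : ∀ i, n i ^ 2 = 2 + (e i 0 + e i 1 + e i 2) := by
    intro i
    rw [hn_def]
    rw [vnorm_sq K33 dK (inl i) (hKpos _), nbhd_inl]
    rw [Finset.sum_insert (by simp), Finset.sum_insert (by decide),
        Finset.sum_insert (by decide), Finset.sum_singleton, hd2]
    ring
  have hmsq : ∀ j, m j ^ 2 = 2 + (e 0 j + e 1 j + e 2 j) := by
    intro j
    rw [hm_def]
    rw [vnorm_sq K33 dK (inr j) (hKpos _), nbhd_inr]
    rw [Finset.sum_insert (by simp), Finset.sum_insert (by decide),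
        Finset.sum_insert (by decide), Finset.sum_singleton, hd2]
    have : ∀ i, dK (inr j) (inl i) = e i j := fun i => hKsym _ _
    rw [this, this, this]; ring
  have hkey : ∀ i j, e i j * (n i * m j - 2) = 4 := by
    intro i j
    have hmem : inr j ∈ closedNbhd K33 (inl i) := by
      rw [nbhd_inl]; simp; exact fin3_cases j
    have hfix := hKfix (inl i) (inr j) hmem
    rw [dress, nbhd_inter] at hfix
    rw [Finset.sum_insert (by simp), Finset.sum_singleton] at hfix
    rw [hd2, hd2] at hfix
    have hne : vnorm K33 dK (inl i) * vnorm K33 dK (inr j) ≠ 0 :=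
      ne_of_gt (mul_pos (hnpos i) (hmpos j))
    rw [div_eq_iff hne] at hfix
    have : dK (inr j) (inr j) = 2 := hd2 _
    nlinarith [hfix]
  have hden : ∀ i j, 0 < n i * m j - 2 := by
    intro i j
    nlinarith [hkey i j, hepos i j]
  -- rows have equal norms
  have hmono : ∀ i i', n i ≤ n i' → n i' ≤ n i := by
    intro i i' hle
    have hj : ∀ j, e i' j ≤ e i j := by
      intro j
      have h1 := hkey i j
      have h2 := hkey i' j
      have d1 := hden i j
      have d2 := hden i' j
      nlinarith [hepos i' j, hmpos j,
        mul_nonneg (mul_nonneg (hepos i' j).le (sub_nonneg.mpr hle)) (hmpos j).le,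
        mul_pos d1 (hepos i' j), mul_pos d1 (hepos i j)]
    have hsq : n i' ^ 2 ≤ n i ^ 2 := by
      rw [hnsq, hnsq]
      have := hj 0; have := hj 1; have := hj 2; linarith
    nlinarith [hnpos i, hnpos i']
  have hneq : ∀ i i', n i = n i' := fun i i' => by
    rcases le_total (n i) (n i') with h | h
    · exact le_antisymm h (hmono i i' h)
    · exact (le_antisymm h (hmono i' i h)).symm
  have hmmono : ∀ j j', m j ≤ m j' → m j' ≤ m j := by
    intro j j' hle
    have hi : ∀ i, e i j' ≤ e i j := by
      intro i
      have h1 := hkey i j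
      have h2 := hkey i j'
      have d1 := hden i j
      have d2 := hden i j'
      nlinarith [hepos i j', hnpos i,
        mul_nonneg (mul_nonneg (hepos i j').le (sub_nonneg.mpr hle)) (hnpos i).le,
        mul_pos d1 (hepos i j'), mul_pos d1 (hepos i j)]
    have hsq : m j' ^ 2 ≤ m j ^ 2 := by
      rw [hmsq, hmsq]
      have := hi 0; have := hi 1; have := hi 2; linarith
    nlinarith [hmpos j, hmpos j']
  have hmeq : ∀ j j', m j = m j' := fun j j' => by
    rcases le_total (m j) (m j') with h | h
    · exact le_antisymm h (hmmono j j' h)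
    · exact (le_antisymm h (hmmono j' j h)).symm
  -- all edge values are equal
  have heeq : ∀ i j, e i j = e 0 0 := by
    intro i j
    have h1 := hkey i j
    have h2 := hkey 0 0
    rw [hneq i 0, hmeq j 0] at h1
    have := hden 0 0
    nlinarith [h1, h2]
  -- solve for the common value
  have hNM : n 0 = m 0 := by
    have h1 := hnsq 0
    have h2 := hmsq 0
    rw [heeq 0 1, heeq 0 2, heeq 1 0, heeq 2 0] at *
    have : n 0 ^ 2 = m 0 ^ 2 := by rw [h1, h2]
    nlinarith [hnpos 0, hmpos 0]
  have hval : e 0 0 = 2 / Real.sqrt 3 := by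
    have h1 := hkey 0 0
    have h2 := hnsq 0
    rw [heeq 0 1, heeq 0 2] at h2
    rw [← hNM] at h1
    -- e * (n^2 - 2) = 4, n^2 = 2 + 3e  ⇒ 3 e^2 = 4
    have hsq3 : e 0 0 ^ 2 = 4 / 3 := by nlinarith [h1, h2]
    have hs3 : (0:ℝ) < Real.sqrt 3 := Real.sqrt_pos.mpr (by norm_num)
    have ht : (2 / Real.sqrt 3) ^ 2 = 4 / 3 := by
      rw [div_pow, Real.sq_sqrt (by norm_num : (3:ℝ) ≥ 0)]; norm_num
    nlinarith [hepos 0 0, div_pos (by norm_num : (0:ℝ) < 2) hs3, hsq3, ht]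
  intro u v huv
  cases u with
  | inl i =>
    cases v with
    | inl i' => simp at huv
    | inr j => rw [show dK (inl i) (inr j) = e i j from rfl, heeq, hval]
  | inr j =>
    cases v with
    | inl i => rw [hKsym, show dK (inl i) (inr j) = e i j from rfl, heeq, hval]
    | inr j' => simp at huv

end Aux

section Prism

lemma padj (a c : Fin 3) (b d : Fin 2) :
    Prism.Adj (a,b) (c,d) ↔ (a ≠ c ∧ b = d) ∨ (b ≠ d ∧ a = c) := by
  simp [SimpleGraph.boxProd_adj]

lemma prism_two_values
    (dP : (Fin 3 × Fin 2) → (Fin 3 × Fin 2) → ℝ)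
    (hPsym : ∀ u v, dP u v = dP v u)
    (hPpos : ∀ u x, x ∈ closedNbhd Prism u → 0 < dP u x)
    (hPfix : ∀ u v, v ∈ closedNbhd Prism u → dress Prism dP u v = dP u v) :
    ∃ u v u' v', Prism.Adj u v ∧ Prism.Adj u' v' ∧ dP u v ≠ dP u' v' := by
  by_contra hcon
  push_neg at hcon
  have hall : ∀ u v u' v', Prism.Adj u v → Prism.Adj u' v' → dP u v = dP u' v' :=
    fun u v u' v' h h' => hcon u v u' v' h h'
  have hd2 : ∀ u, dP u u = 2 := fun u =>
    diag_eq_two Prism dP u hPsym (hPpos u) (hPfix u u (mem_closed_self Prism u))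
  set e : ℝ := dP (0,0) (1,0) with he_def
  have a1 : Prism.Adj (0,0) (1,0) := (padj _ _ _ _).mpr (by decide)
  have a2 : Prism.Adj (0,0) (2,0) := (padj _ _ _ _).mpr (by decide)
  have a3 : Prism.Adj (0,0) (0,1) := (padj _ _ _ _).mpr (by decide)
  have a4 : Prism.Adj (0,1) (1,1) := (padj _ _ _ _).mpr (by decide)
  have a5 : Prism.Adj (0,1) (2,1) := (padj _ _ _ _).mpr (by decide)
  have a6 : Prism.Adj (0,1) (0,0) := (padj _ _ _ _).mpr (by decide)
  have a7 : Prism.Adj (1,0) (0,0) := (padj _ _ _ _).mpr (by decide)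
  have a8 : Prism.Adj (1,0) (2,0) := (padj _ _ _ _).mpr (by decide)
  have a9 : Prism.Adj (1,0) (1,1) := (padj _ _ _ _).mpr (by decide)
  have a10 : Prism.Adj (2,0) (1,0) := (padj _ _ _ _).mpr (by decide)
  have hepos : 0 < e := hPpos (0,0) (1,0) (by rw [pn00]; decide)
  have hS00 : ∑ x ∈ closedNbhd Prism (0,0), dP (0,0) x = 2 + 3*e := by
    rw [pn00, Finset.sum_insert (by decide), Finset.sum_insert (by decide),
        Finset.sum_insert (by decide), Finset.sum_singleton, hd2,
        hall _ _ _ _ a2 a1, hall _ _ _ _ a3 a1]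
    ring
  have hS01 : ∑ x ∈ closedNbhd Prism (0,1), dP (0,1) x = 2 + 3*e := by
    rw [pn01, Finset.sum_insert (by decide), Finset.sum_insert (by decide),
        Finset.sum_insert (by decide), Finset.sum_singleton, hd2,
        hall _ _ _ _ a4 a1, hall _ _ _ _ a5 a1, hall _ _ _ _ a6 a1]
    ring
  have hS10 : ∑ x ∈ closedNbhd Prism (1,0), dP (1,0) x = 2 + 3*e := by
    rw [pn10, Finset.sum_insert (by decide), Finset.sum_insert (by decide),
        Finset.sum_insert (by decide), Finset.sum_singleton, hd2,
        hall _ _ _ _ a7 a1, hall _ _ _ _ a8 a1, hall _ _ _ _ a9 a1]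
    ring
  have hpos3 : (0:ℝ) ≤ 2 + 3*e := by linarith
  have hv00 : vnorm Prism dP (0,0) = Real.sqrt (2 + 3*e) := by rw [vnorm, hS00]
  have hv01 : vnorm Prism dP (0,1) = Real.sqrt (2 + 3*e) := by rw [vnorm, hS01]
  have hv10 : vnorm Prism dP (1,0) = Real.sqrt (2 + 3*e) := by rw [vnorm, hS10]
  -- vertical edge equation
  have hfv := hPfix (0,0) (0,1) (by rw [pn00]; decide)
  rw [dress, pint_vert, Finset.sum_insert (by decide), Finset.sum_singleton,
      hv00, hv01, Real.mul_self_sqrt hpos3, hd2, hd2] at hfv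
  have hev : dP (0,0) (0,1) = e := hall _ _ _ _ a3 a1
  rw [hPsym (0,0) (0,1)] at hev
  -- triangle edge equation
  have hft := hPfix (0,0) (1,0) (by rw [pn00]; decide)
  rw [dress, pint_tri, Finset.sum_insert (by decide), Finset.sum_insert (by decide),
      Finset.sum_singleton, hv00, hv10, Real.mul_self_sqrt hpos3, hd2, hd2] at hft
  have he2 : dP (0,0) (2,0) = e := hall _ _ _ _ a2 a1
  have he3 : dP (2,0) (1,0) = e := hall _ _ _ _ a10 a1
  have hd : (2:ℝ) + 3*e > 0 := by linarith
  rw [div_eq_iff (ne_of_gt hd)] at hfv hft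
  -- hfv : sum_vert = dP (0,0)(0,1) * (2+3e),  hft : sum_tri = e * (2+3e)
  have h1 : 4 + 2*e = e * (2+3*e) := by
    have := hev
    have hsv : dP (0,1) (0,0) = e := hev
    nlinarith [hfv, hev, hPsym (0,0) (0,1), hsv]
  have h2 : 4 + 4*e = e * (2+3*e) := by nlinarith [hft, he2, he3]
  linarith

end Prism

lemma mem_edgeValues {V : Type*} [Fintype V] [DecidableEq V]
    (G : SimpleGraph V) [DecidableRel G.Adj]
    (d : V → V → ℝ) (hsym : ∀ u v, d u v = d v u) {u v : V} (h : G.Adj u v) :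
    d u v ∈ edgeValues G d hsym := by
  rw [edgeValues]
  apply Multiset.mem_map.mpr
  exact ⟨s(u,v), by simpa [SimpleGraph.mem_edgeFinset] using h, by simp⟩

lemma edgeValues_const {V : Type*} [Fintype V] [DecidableEq V]
    (G : SimpleGraph V) [DecidableRel G.Adj]
    (d : V → V → ℝ) (hsym : ∀ u v, d u v = d v u) (c : ℝ)
    (h : ∀ u v, G.Adj u v → d u v = c) :
    ∀ r ∈ edgeValues G d hsym, r = c := by
  intro r hr
  rw [edgeValues] at hr
  obtain ⟨a, ha, rfl⟩ := Multiset.mem_map.mp hr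
  induction a using Sym2.ind with
  | _ x y =>
    simp only [Sym2.lift_mk]
    exact h x y (by simpa [SimpleGraph.mem_edgeFinset] using ha)

/-- Original-DRESS distinguishes the prism graph from `K_{3,3}` (Theorem 2):
for any symmetric positive DRESS fixed points `dP` on the prism and `dK` on
`K_{3,3}`, the multisets of edge values differ; moreover `dP` takes at least
two distinct edge values while `dK` is constantly `2/√3` on edges. -/
theorem dress_distinguishes_prism_from_K33
    (dP : (Fin 3 × Fin 2) → (Fin 3 × Fin 2) → ℝ)
    (hPsym : ∀ u v, dP u v = dP v u)
    (hPpos : ∀ u x, x ∈ closedNbhd Prism u → 0 < dP u x)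
    (hPfix : ∀ u v, v ∈ closedNbhd Prism u → dress Prism dP u v = dP u v)
    (dK : (Fin 3 ⊕ Fin 3) → (Fin 3 ⊕ Fin 3) → ℝ)
    (hKsym : ∀ u v, dK u v = dK v u)
    (hKpos : ∀ u x, x ∈ closedNbhd K33 u → 0 < dK u x)
    (hKfix : ∀ u v, v ∈ closedNbhd K33 u → dress K33 dK u v = dK u v) :
    edgeValues Prism dP hPsym ≠ edgeValues K33 dK hKsym ∧
    (∃ u v u' v', Prism.Adj u v ∧ Prism.Adj u' v' ∧ dP u v ≠ dP u' v') ∧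
    (∀ u v, K33.Adj u v → dK u v = 2 / Real.sqrt 3) := by
  have hK := K33_const dK hKsym hKpos hKfix
  have hP := prism_two_values dP hPsym hPpos hPfix
  refine ⟨?_, hP, hK⟩
  intro heq
  obtain ⟨u, v, u', v', h1, h2, hne⟩ := hP
  have hc := edgeValues_const K33 dK hKsym (2 / Real.sqrt 3) hK
  have m1 : dP u v ∈ edgeValues K33 dK hKsym := heq ▸ mem_edgeValues Prism dP hPsym h1
  have m2 : dP u' v' ∈ edgeValues K33 dK hKsym := heq ▸ mem_edgeValues Prism dP hPsym h2
  exact hne ((hc _ m1).trans (hc _ m2).symm)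
end

section
/- Per-step bound for the Motif-DRESS update: for every finite simple graph G, every neighborhood operator 𝒩 assigning to each pair (u,v) a finite set of vertices, every symmetric weight function w : V × V → ℝ that is nonnegative everywhere and zero on every pair (a,b) with b ∉ N[a], and every symmetric nonnegative function d : V × V → ℝ with ‖u‖_{w,d} > 0 for every vertex u, one has F_M(d)(u,v) ≤ ‖u‖_{w,d}/‖v‖_{w,d} + ‖v‖_{w,d}/‖u‖_{w,d} for all vertices u, v. -/
open Finset

/-- The weighted vertex norm `‖u‖_{w,d} = sqrt (∑_{x ∈ N[u]} w u x * d u x)`. -/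
noncomputable def wnorm {V : Type*} [Fintype V] [DecidableEq V]
    (G : SimpleGraph V) [DecidableRel G.Adj] (w d : V → V → ℝ) (u : V) : ℝ :=
  Real.sqrt (∑ x ∈ closedNbhd G u, w u x * d u x)

/-- The Motif-DRESS update operator, for a neighborhood operator `Nb` and a
weight function `w`. -/
noncomputable def motifDress {V : Type*} [Fintype V] [DecidableEq V]
    (G : SimpleGraph V) [DecidableRel G.Adj]
    (Nb : V → V → Finset V) (w d : V → V → ℝ) (u v : V) : ℝ :=
  (∑ x ∈ Nb u v, (w u x * d u x + w x v * d x v)) /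
    (wnorm G w d u * wnorm G w d v)

/-- Per-step bound for the Motif-DRESS update:
`F_M(d)(u,v) ≤ ‖u‖_{w,d}/‖v‖_{w,d} + ‖v‖_{w,d}/‖u‖_{w,d}`. -/
theorem motifDress_per_step_bound
    {V : Type*} [Fintype V] [DecidableEq V]
    (G : SimpleGraph V) [DecidableRel G.Adj]
    (Nb : V → V → Finset V)
    (w : V → V → ℝ) (hwsym : ∀ a b, w a b = w b a)
    (hwnonneg : ∀ a b, 0 ≤ w a b)
    (hwzero : ∀ a b, b ∉ closedNbhd G a → w a b = 0)
    (d : V → V → ℝ) (hdsym : ∀ a b, d a b = d b a)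
    (hdnonneg : ∀ a b, 0 ≤ d a b)
    (hnorm : ∀ u, 0 < wnorm G w d u)
    (u v : V) :
    motifDress G Nb w d u v ≤
      wnorm G w d u / wnorm G w d v + wnorm G w d v / wnorm G w d u := by
  set nu := wnorm G w d u with hnu
  set nv := wnorm G w d v with hnv
  have hu := hnorm u
  have hv := hnorm v
  -- sum bound lemma
  have key : ∀ a : V, (∑ x ∈ Nb u v, w a x * d a x) ≤ nu * nu ∨ True := fun _ => Or.inr trivial
  have sum_le : ∀ a : V, (∑ x ∈ Nb u v, w a x * d a x) ≤ ∑ x ∈ closedNbhd G a, w a x * d a x := by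
    intro a
    have h1 : (∑ x ∈ Nb u v, w a x * d a x) = ∑ x ∈ Nb u v ∩ closedNbhd G a, w a x * d a x := by
      refine (Finset.sum_subset (Finset.inter_subset_left) ?_).symm
      intro x hx hx'
      have : x ∉ closedNbhd G a := fun h => hx' (Finset.mem_inter.mpr ⟨hx, h⟩)
      rw [hwzero a x this, zero_mul]
    rw [h1]
    exact Finset.sum_le_sum_of_subset_of_nonneg (Finset.inter_subset_right)
      (fun x _ _ => mul_nonneg (hwnonneg a x) (hdnonneg a x))
  have hsqu : nu * nu = ∑ x ∈ closedNbhd G u, w u x * d u x := by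
    rw [hnu, wnorm]
    exact Real.mul_self_sqrt (Finset.sum_nonneg fun x _ =>
      mul_nonneg (hwnonneg u x) (hdnonneg u x))
  have hsqv : nv * nv = ∑ x ∈ closedNbhd G v, w v x * d v x := by
    rw [hnv, wnorm]
    exact Real.mul_self_sqrt (Finset.sum_nonneg fun x _ =>
      mul_nonneg (hwnonneg v x) (hdnonneg v x))
  have hnum : (∑ x ∈ Nb u v, (w u x * d u x + w x v * d x v)) ≤ nu * nu + nv * nv := by
    rw [Finset.sum_add_distrib, hsqu, hsqv]
    have h2 : (∑ x ∈ Nb u v, w x v * d x v) = ∑ x ∈ Nb u v, w v x * d v x := by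
      refine Finset.sum_congr rfl fun x _ => ?_
      rw [hwsym, hdsym]
    exact add_le_add (sum_le u) (h2 ▸ sum_le v)
  rw [motifDress, div_add_div _ _ (ne_of_gt hv) (ne_of_gt hu)]
  rw [div_le_div_iff₀ (by positivity) (by positivity)]
  calc (∑ x ∈ Nb u v, (w u x * d u x + w x v * d x v)) * (nv * nu)
      ≤ (nu * nu + nv * nv) * (nv * nu) := by
        exact mul_le_mul_of_nonneg_right hnum (by positivity)
    _ = (nu * nu + nv * nv) * (nu * nv) := by ring
end
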